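/- arXiv:2512.21839 — 2 statements merged into one kernel-verified Lean document; each statement's English description precedes it below -/
import Mathlib

section
/- Inside the fraction field F of the polynomial ring K[a,b,c], the intersection of the K-subalgebra generated by {a, a⁻¹, b, b⁻¹, ac−b, (ac−b)⁻¹} with the K-subalgebra generated by {c, c⁻¹, b, b⁻¹, ac−b, (ac−b)⁻¹} equals the K-subalgebra generated by {a, b, c, b⁻¹, (ac−b)⁻¹}. -/
open MvPolynomial

/-- Characterization of elements of `adjoin K {u,u⁻¹,v,v⁻¹,w,w⁻¹}` as elements that
become members of `adjoin K {u,v,w}` after multiplying by a power of `u*v*w`. -/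
lemma adjoin_inv_char {K F : Type*} [Field K] [Field F] [Algebra K F]
    (u v w : F) (hu : u ≠ 0) (hv : v ≠ 0) (hw : w ≠ 0) (x : F)
    (hx : x ∈ Algebra.adjoin K {u, u⁻¹, v, v⁻¹, w, w⁻¹}) :
    ∃ (y : F) (n : ℕ), y ∈ Algebra.adjoin K {u, v, w} ∧ x * (u * v * w) ^ n = y := by
  induction hx using Algebra.adjoin_induction with
  | mem z hz =>
    have hU : u ∈ Algebra.adjoin K {u, v, w} :=
      Algebra.subset_adjoin (by simp)
    have hV : v ∈ Algebra.adjoin K {u, v, w} :=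
      Algebra.subset_adjoin (by simp)
    have hW : w ∈ Algebra.adjoin K {u, v, w} :=
      Algebra.subset_adjoin (by simp)
    have hS : (u * v * w) ∈ Algebra.adjoin K {u, v, w} := mul_mem (mul_mem hU hV) hW
    rcases hz with h | h | h | h | h | h
    · exact ⟨z * (u * v * w), 1, mul_mem (h ▸ hU) hS, by rw [pow_one]⟩
    · exact ⟨v * w, 1, mul_mem hV hW, by rw [h, pow_one]; field_simp; try ring⟩
    · exact ⟨z * (u * v * w), 1, mul_mem (h ▸ hV) hS, by rw [pow_one]⟩
    · exact ⟨u * w, 1, mul_mem hU hW, by rw [h, pow_one]; field_simp; try ring⟩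
    · exact ⟨z * (u * v * w), 1, mul_mem (h ▸ hW) hS, by rw [pow_one]⟩
    · exact ⟨u * v, 1, mul_mem hU hV, by rw [h, pow_one]; field_simp; try ring⟩
  | algebraMap r =>
    exact ⟨algebraMap K F r, 0, Subalgebra.algebraMap_mem _ r, by simp⟩
  | add z₁ z₂ hz₁ hz₂ ih₁ ih₂ =>
    obtain ⟨y₁, n₁, hy₁, e₁⟩ := ih₁
    obtain ⟨y₂, n₂, hy₂, e₂⟩ := ih₂
    have hS : (u * v * w) ∈ Algebra.adjoin K {u, v, w} :=
      mul_mem (mul_mem (Algebra.subset_adjoin (by simp)) (Algebra.subset_adjoin (by simp)))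
        (Algebra.subset_adjoin (by simp))
    refine ⟨y₁ * (u * v * w) ^ n₂ + y₂ * (u * v * w) ^ n₁, n₁ + n₂,
      add_mem (mul_mem hy₁ (pow_mem hS n₂)) (mul_mem hy₂ (pow_mem hS n₁)), ?_⟩
    rw [← e₁, ← e₂]; ring
  | mul z₁ z₂ hz₁ hz₂ ih₁ ih₂ =>
    obtain ⟨y₁, n₁, hy₁, e₁⟩ := ih₁
    obtain ⟨y₂, n₂, hy₂, e₂⟩ := ih₂
    refine ⟨y₁ * y₂, n₁ + n₂, mul_mem hy₁ hy₂, ?_⟩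
    rw [← e₁, ← e₂]; ring


lemma prime_X0 (K : Type*) [Field K] :
    Prime (X 0 : MvPolynomial (Fin 3) K) := by
  refine (MulEquiv.prime_iff (MvPolynomial.finSuccEquiv K 2).toMulEquiv).mp ?_
  show Prime ((MvPolynomial.finSuccEquiv K 2) (X 0))
  rw [MvPolynomial.finSuccEquiv_X_zero]
  exact Polynomial.prime_X

/-- In the fraction field `F` of `K[a,b,c]`, the intersection of the `K`-subalgebra
generated by `{a, a⁻¹, b, b⁻¹, ac−b, (ac−b)⁻¹}` with the `K`-subalgebra generated by
`{c, c⁻¹, b, b⁻¹, ac−b, (ac−b)⁻¹}` equals the `K`-subalgebra generated by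
`{a, b, c, b⁻¹, (ac−b)⁻¹}`. -/
theorem stmt3 (K : Type*) [Field K] [IsAlgClosed K] [CharZero K]
    (F : Type*) [Field F] [Algebra (MvPolynomial (Fin 3) K) F]
    [IsFractionRing (MvPolynomial (Fin 3) K) F]
    [Algebra K F] [IsScalarTower K (MvPolynomial (Fin 3) K) F]
    (a b c : F)
    (ha : a = algebraMap (MvPolynomial (Fin 3) K) F (X 0))
    (hb : b = algebraMap (MvPolynomial (Fin 3) K) F (X 1))
    (hc : c = algebraMap (MvPolynomial (Fin 3) K) F (X 2)) :
    Algebra.adjoin K {a, a⁻¹, b, b⁻¹, a * c - b, (a * c - b)⁻¹} ⊓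
      Algebra.adjoin K {c, c⁻¹, b, b⁻¹, a * c - b, (a * c - b)⁻¹} =
    Algebra.adjoin K {a, b, c, b⁻¹, (a * c - b)⁻¹} := by
  set R := MvPolynomial (Fin 3) K
  set φ := algebraMap R F with hφ
  have hinj : Function.Injective φ := IsFractionRing.injective R F
  set P : R := X 0 * X 2 - X 1 with hP
  have hpP : a * c - b = φ P := by rw [ha, hb, hc, hP, map_sub, map_mul]
  -- the "kill X 0" evaluation
  set ψ : R →ₐ[K] R := aeval (fun i : Fin 3 => if i = 0 then 0 else X i) with hψ
  have hψ0 : ψ (X 0) = 0 := by rw [hψ, aeval_X]; exact if_pos rfl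
  have hψ1 : ψ (X 1) = X 1 := by rw [hψ, aeval_X]; exact if_neg (by decide)
  have hψ2 : ψ (X 2) = X 2 := by rw [hψ, aeval_X]; exact if_neg (by decide)
  have hndvd : ∀ g : R, ψ g ≠ 0 → ¬ X 0 ∣ g := by
    intro g hg ⟨q, hq⟩
    apply hg
    rw [hq, map_mul, hψ0, zero_mul]
  have hndvd1 : ¬ (X 0 : R) ∣ X 1 := hndvd _ (by rw [hψ1]; exact X_ne_zero 1)
  have hndvd2 : ¬ (X 0 : R) ∣ X 2 := hndvd _ (by rw [hψ2]; exact X_ne_zero 2)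
  have hψP : ψ P = - X 1 := by rw [hP, map_sub, map_mul, hψ0, hψ1, zero_mul, zero_sub]
  have hndvdP : ¬ (X 0 : R) ∣ P := hndvd _ (by rw [hψP]; exact neg_ne_zero.mpr (X_ne_zero 1))
  have hPne : P ≠ 0 := fun h => hndvdP (h ▸ dvd_zero _)
  have ha0 : a ≠ 0 := by
    rw [ha]; exact fun h => X_ne_zero 0 (hinj (h.trans (map_zero φ).symm))
  have hb0 : b ≠ 0 := by
    rw [hb]; exact fun h => X_ne_zero 1 (hinj (h.trans (map_zero φ).symm))
  have hc0 : c ≠ 0 := by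
    rw [hc]; exact fun h => X_ne_zero 2 (hinj (h.trans (map_zero φ).symm))
  have hp0 : a * c - b ≠ 0 := by
    rw [hpP]; exact fun h => hPne (hinj (h.trans (map_zero φ).symm))
  -- the range of φ is contained in the target adjoin
  have hrange : ∀ f : R, φ f ∈ Algebra.adjoin K {a, b, c, b⁻¹, (a * c - b)⁻¹} := by
    intro f
    induction f using MvPolynomial.induction_on with
    | C r =>
      have : φ (C r) = algebraMap K F r := by
        rw [hφ, show (C r : R) = algebraMap K R r from rfl,
          ← IsScalarTower.algebraMap_apply]
      rw [this]; exact Subalgebra.algebraMap_mem _ r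
    | add f g hf hg => rw [map_add]; exact add_mem hf hg
    | mul_X f i hf =>
      rw [map_mul]
      refine mul_mem hf ?_
      fin_cases i
      · exact ha ▸ Algebra.subset_adjoin (by simp)
      · exact hb ▸ Algebra.subset_adjoin (by simp)
      · exact hc ▸ Algebra.subset_adjoin (by simp)
  apply le_antisymm
  · -- hard direction
    rintro x ⟨hxA, hxB⟩
    obtain ⟨y₁, n, hy₁, e₁⟩ := adjoin_inv_char (K := K) a b (a * c - b) ha0 hb0 hp0 x hxA
    obtain ⟨y₂, m, hy₂, e₂⟩ := adjoin_inv_char (K := K) c b (a * c - b) hc0 hb0 hp0 x hxB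
    -- y₁, y₂ are in the range of φ
    have hrangeA : y₁ ∈ (IsScalarTower.toAlgHom K R F).range := by
      refine Algebra.adjoin_le ?_ hy₁
      rintro z (rfl | rfl | rfl)
      · exact ⟨X 0, ha.symm⟩
      · exact ⟨X 1, hb.symm⟩
      · exact ⟨P, hpP.symm⟩
    have hrangeB : y₂ ∈ (IsScalarTower.toAlgHom K R F).range := by
      refine Algebra.adjoin_le ?_ hy₂
      rintro z (rfl | rfl | rfl)
      · exact ⟨X 2, hc.symm⟩
      · exact ⟨X 1, hb.symm⟩
      · exact ⟨P, hpP.symm⟩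
    obtain ⟨f, hf⟩ := hrangeA
    obtain ⟨g, hg⟩ := hrangeB
    have hf' : x * (a * b * (a * c - b)) ^ n = φ f := e₁.trans hf.symm
    have hg' : x * (c * b * (a * c - b)) ^ m = φ g := e₂.trans hg.symm
    -- the key polynomial identity
    have key : f * (X 2 * X 1 * P) ^ m = g * (X 0 * X 1 * P) ^ n := by
      apply hinj
      rw [map_mul, map_mul, map_pow, map_pow, ← hf', ← hg']
      rw [map_mul, map_mul, map_mul, map_mul, ← ha, ← hb, ← hc, ← hpP]
      ring
    -- X 0 ^ n divides f
    have hXdvd : (X 0 : R) ^ n ∣ f := by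
      have hdvd : (X 0 : R) ^ n ∣ f * (X 2 * X 1 * P) ^ m := ⟨g * X 1 ^ n * P ^ n, by
        rw [key, show (X 0 * X 1 * P : R) ^ n = X 0 ^ n * X 1 ^ n * P ^ n by
          rw [mul_pow, mul_pow]]; ring⟩
      refine (prime_X0 K).pow_dvd_of_dvd_mul_right n ?_ hdvd
      intro hd
      rcases (prime_X0 K).dvd_of_dvd_pow hd with h
      rcases (prime_X0 K).dvd_mul.mp h with h' | h'
      · rcases (prime_X0 K).dvd_mul.mp h' with h'' | h''
        · exact hndvd2 h''
        · exact hndvd1 h''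
      · exact hndvdP h'
    obtain ⟨h, hh⟩ := hXdvd
    -- cancel a^n
    have hx_eq : x * (b * (a * c - b)) ^ n = φ h := by
      have : a ^ n * (x * (b * (a * c - b)) ^ n) = a ^ n * φ h := by
        calc a ^ n * (x * (b * (a * c - b)) ^ n)
            = x * (a * b * (a * c - b)) ^ n := by
              rw [show (a * b * (a * c - b)) ^ n = a ^ n * (b * (a * c - b)) ^ n by
                rw [mul_assoc, mul_pow]]; ring
          _ = φ f := hf'
          _ = a ^ n * φ h := by rw [hh, map_mul, map_pow, ha]
      exact mul_left_cancel₀ (pow_ne_zero n ha0) this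
    -- conclude membership
    have : x = φ h * (b⁻¹ * (a * c - b)⁻¹) ^ n := by
      rw [← hx_eq, ← mul_inv, inv_pow, mul_assoc,
        mul_inv_cancel₀ (pow_ne_zero n (mul_ne_zero hb0 hp0)), mul_one]
    rw [this]
    refine mul_mem (hrange h) (pow_mem (mul_mem ?_ ?_) n)
    · exact Algebra.subset_adjoin (by simp)
    · exact Algebra.subset_adjoin (by simp)
  · -- easy direction
    rw [le_inf_iff]
    constructor <;> refine Algebra.adjoin_le ?_ <;> rintro z (h | h | h | h | h) <;> rw [h]
    · exact Algebra.subset_adjoin (by simp)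
    · exact Algebra.subset_adjoin (by simp)
    · -- c ∈ A
      have hcc : c = ((a * c - b) + b) * a⁻¹ := by field_simp; ring
      have hmem : ((a * c - b) + b) * a⁻¹ ∈
          Algebra.adjoin K {a, a⁻¹, b, b⁻¹, a * c - b, (a * c - b)⁻¹} :=
        mul_mem (add_mem (Algebra.subset_adjoin (by simp)) (Algebra.subset_adjoin (by simp)))
          (Algebra.subset_adjoin (by simp))
      rw [← hcc] at hmem
      exact hmem
    · exact Algebra.subset_adjoin (by simp)
    · exact Algebra.subset_adjoin (by simp)
    · -- a ∈ B
      have haa : a = ((a * c - b) + b) * c⁻¹ := by field_simp; try ring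
      have hmem : ((a * c - b) + b) * c⁻¹ ∈
          Algebra.adjoin K {c, c⁻¹, b, b⁻¹, a * c - b, (a * c - b)⁻¹} :=
        mul_mem (add_mem (Algebra.subset_adjoin (by simp)) (Algebra.subset_adjoin (by simp)))
          (Algebra.subset_adjoin (by simp))
      rw [← haa] at hmem
      exact hmem
    · exact Algebra.subset_adjoin (by simp)
    · exact Algebra.subset_adjoin (by simp)
    · exact Algebra.subset_adjoin (by simp)
    · exact Algebra.subset_adjoin (by simp)
end

section
/- The image of u in S is a prime element of S, where S is the localization of the polynomial ring K[u,v] away from the element uv − λ. -/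
open MvPolynomial

lemma primeX0 (K : Type*) [Field K] : Prime (X 0 : MvPolynomial (Fin 2) K) := by
  refine (MulEquiv.prime_iff (MvPolynomial.finSuccEquiv K 1).toMulEquiv).mp ?_
  rw [show ((MvPolynomial.finSuccEquiv K 1).toMulEquiv (X 0) :
      Polynomial (MvPolynomial (Fin 1) K)) = Polynomial.X from
    MvPolynomial.finSuccEquiv_X_zero ..]
  exact Polynomial.prime_X

/-- The image of `u` is a prime element of the localization `S` of `K[u,v]`
away from the element `uv − λ`. -/
theorem stmt7 (K : Type*) [Field K] [IsAlgClosed K] [CharZero K]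
    (l : K) (hl : l ≠ 0) :
    Prime (algebraMap (MvPolynomial (Fin 2) K)
      (Localization.Away ((X 0 * X 1 - C l : MvPolynomial (Fin 2) K))) (X 0)) := by
  set R := MvPolynomial (Fin 2) K
  set f : R := X 0 * X 1 - C l
  set S := Localization.Away f
  have hp : Prime (X 0 : R) := primeX0 K
  have hf : f ≠ 0 := by
    intro h
    have := congrArg constantCoeff h
    simp [f] at this
    exact hl this
  have hinj : Function.Injective (algebraMap R S) :=
    IsLocalization.injective S (powers_le_nonZeroDivisors_of_noZeroDivisors hf)
  -- disjointness: no power of f lies in span {X 0}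
  have hdvd : ¬ (X 0 : R) ∣ f := by
    intro h
    have h2 : (X 0 : R) ∣ C l := by
      have := dvd_sub (Dvd.intro (X 1) rfl) h
      simpa [f] using this
    obtain ⟨q, hq⟩ := h2
    have := congrArg constantCoeff hq
    simp at this
    exact hl this
  have hdisj : Disjoint (Submonoid.powers f : Set R) (Ideal.span {(X 0 : R)} : Set R) := by
    rw [Set.disjoint_left]
    rintro a ⟨n, rfl⟩ ha
    rw [SetLike.mem_coe, Ideal.mem_span_singleton] at ha
    exact hdvd (hp.dvd_of_dvd_pow ha)
  have hprime_ideal : (Ideal.map (algebraMap R S) (Ideal.span {(X 0 : R)})).IsPrime := by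
    refine IsLocalization.isPrime_of_isPrime_disjoint (Submonoid.powers f) S _ ?_ hdisj
    exact (Ideal.span_singleton_prime hp.ne_zero).mpr hp
  rw [Ideal.map_span, Set.image_singleton] at hprime_ideal
  have hne : algebraMap R S (X 0) ≠ 0 := by
    intro h
    exact hp.ne_zero (hinj (by simpa using h))
  exact (Ideal.span_singleton_prime hne).mp hprime_ideal
end
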